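/- ψ ∘ Ξ = ξ_{q,t} ∘ ψ as S-linear maps M → N. (This identifies multiplication by the hyperplane class on the equivariant cohomology of infinite projective space, after cyclic specialization of the equivariant parameters modulo n, with equivariant quantum multiplication by the hyperplane class on QH_T^*ℙ^{n−1}.) -/

import Mathlib

open scoped BigOperators

noncomputable section

open MvPolynomial

/-- **rim-hook reduction intertwines the Chevalley operators, `k = 1`.**
Fix `n ≥ 1` and `S = ℤ[t_1,…,t_n]`.  Let `M` be the free `S`-module with basis
`(ε_m)_{m ≥ 1}` and `Ξ` the `S`-linear map with `Ξ ε_m = ε_{m+1} − t_{r(m)} ε_m`, where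
`r(m) ∈ {1,…,n}` is the representative of `m` mod `n`.  Let `N = S[q]^n` with basis
`ε_1,…,ε_n` and `ξ_{q,t}` the `S[q]`-linear map with `ξ_{q,t} ε_i = ε_{i+1} − t_i ε_i`
for `i < n` and `ξ_{q,t} ε_n = q ε_1 − t_n ε_n`.  Let `ψ : M → N` be the `S`-linear map
with `ψ(ε_{sn+i}) = q^s ε_i`.  Then `ψ ∘ Ξ = ξ_{q,t} ∘ ψ`.
(All indices are `0`-based: `Finsupp.single m 1 = ε_{m+1}`, `Pi.single i 1 = ε_{i+1}`,
`X i = t_{i+1}`, `q = Polynomial.X`.) -/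
theorem psi_intertwines_chevalley (n : ℕ) (hn : 0 < n)
    (Ξ : (ℕ →₀ MvPolynomial (Fin n) ℤ) →ₗ[MvPolynomial (Fin n) ℤ]
          (ℕ →₀ MvPolynomial (Fin n) ℤ))
    (hΞ : ∀ m : ℕ, Ξ (Finsupp.single m (1 : MvPolynomial (Fin n) ℤ)) =
      Finsupp.single (m + 1) (1 : MvPolynomial (Fin n) ℤ) -
        (X (⟨m % n, Nat.mod_lt m hn⟩ : Fin n) : MvPolynomial (Fin n) ℤ) •
          Finsupp.single m (1 : MvPolynomial (Fin n) ℤ))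
    (ξqt : (Fin n → Polynomial (MvPolynomial (Fin n) ℤ))
        →ₗ[Polynomial (MvPolynomial (Fin n) ℤ)]
          (Fin n → Polynomial (MvPolynomial (Fin n) ℤ)))
    (hξ : ∀ i : Fin n, (h : (i : ℕ) + 1 < n) →
      ξqt (Pi.single i (1 : Polynomial (MvPolynomial (Fin n) ℤ))) =
        Pi.single (⟨(i : ℕ) + 1, h⟩ : Fin n) (1 : Polynomial (MvPolynomial (Fin n) ℤ)) -
          Polynomial.C (X i : MvPolynomial (Fin n) ℤ) •
            (Pi.single i (1 : Polynomial (MvPolynomial (Fin n) ℤ)) :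
              Fin n → Polynomial (MvPolynomial (Fin n) ℤ)))
    (hξlast : ξqt (Pi.single (⟨n - 1, by omega⟩ : Fin n)
          (1 : Polynomial (MvPolynomial (Fin n) ℤ))) =
        (Polynomial.X : Polynomial (MvPolynomial (Fin n) ℤ)) •
          (Pi.single (⟨0, hn⟩ : Fin n)
            (1 : Polynomial (MvPolynomial (Fin n) ℤ)) :
              Fin n → Polynomial (MvPolynomial (Fin n) ℤ)) -
          Polynomial.C (X (⟨n - 1, by omega⟩ : Fin n) : MvPolynomial (Fin n) ℤ) •
            (Pi.single (⟨n - 1, by omega⟩ : Fin n)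
              (1 : Polynomial (MvPolynomial (Fin n) ℤ)) :
                Fin n → Polynomial (MvPolynomial (Fin n) ℤ)))
    (ψ : (ℕ →₀ MvPolynomial (Fin n) ℤ) →ₗ[MvPolynomial (Fin n) ℤ]
          (Fin n → Polynomial (MvPolynomial (Fin n) ℤ)))
    (hψ : ∀ m : ℕ, ψ (Finsupp.single m (1 : MvPolynomial (Fin n) ℤ)) =
      (Polynomial.X : Polynomial (MvPolynomial (Fin n) ℤ)) ^ (m / n) •
        (Pi.single (⟨m % n, Nat.mod_lt m hn⟩ : Fin n)
          (1 : Polynomial (MvPolynomial (Fin n) ℤ)) :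
            Fin n → Polynomial (MvPolynomial (Fin n) ℤ))) :
    ∀ x : ℕ →₀ MvPolynomial (Fin n) ℤ, ψ (Ξ x) = ξqt (ψ x) := by
  have key : ∀ (c : MvPolynomial (Fin n) ℤ)
      (v : Fin n → Polynomial (MvPolynomial (Fin n) ℤ)),
      c • v = Polynomial.C c • v := by
    intro c v
    rw [← Polynomial.algebraMap_eq, algebraMap_smul]
  have single : ∀ m : ℕ, ψ (Ξ (Finsupp.single m (1 : MvPolynomial (Fin n) ℤ))) =
      ξqt (ψ (Finsupp.single m (1 : MvPolynomial (Fin n) ℤ))) := by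
    intro m
    rw [hΞ, map_sub, map_smul, hψ m, hψ (m + 1)]
    by_cases hc : m % n + 1 < n
    · have h1 : (m + 1) % n = m % n + 1 := by
        rw [Nat.add_mod, Nat.mod_eq_of_lt (show 1 < n by omega),
          Nat.mod_eq_of_lt hc]
      have hnd : ¬ n ∣ m + 1 := by
        intro hd
        rw [Nat.mod_eq_zero_of_dvd hd] at h1
        omega
      have h2 : (m + 1) / n = m / n := by
        simp [Nat.succ_div, hnd]
      have e : (⟨(m + 1) % n, Nat.mod_lt (m + 1) hn⟩ : Fin n)
          = (⟨m % n + 1, hc⟩ : Fin n) := by simp [h1]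
      rw [e, h2, map_smul, hξ ⟨m % n, Nat.mod_lt m hn⟩ hc, key, smul_sub,
        smul_comm (Polynomial.C (X (⟨m % n, Nat.mod_lt m hn⟩ : Fin n)))
          ((Polynomial.X : Polynomial (MvPolynomial (Fin n) ℤ)) ^ (m / n))]
    · have hmodeq : m % n = n - 1 := by
        have := Nat.mod_lt m hn; omega
      have heq : m + 1 = n * (m / n + 1) := by
        have h := Nat.div_add_mod m n
        rw [Nat.mul_add, Nat.mul_one]
        conv_lhs => rw [← h]
        rw [hmodeq, Nat.add_assoc, Nat.sub_add_cancel hn]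
      have hd : n ∣ m + 1 := ⟨m / n + 1, heq⟩
      have h1 : (m + 1) % n = 0 := by rw [heq, Nat.mul_mod_right]
      have h2 : (m + 1) / n = m / n + 1 := by
        rw [Nat.succ_div, if_pos hd]
      have e1 : (⟨m % n, Nat.mod_lt m hn⟩ : Fin n)
          = (⟨n - 1, by omega⟩ : Fin n) := by simp [hmodeq]
      have e2 : (⟨(m + 1) % n, Nat.mod_lt (m + 1) hn⟩ : Fin n)
          = (⟨0, hn⟩ : Fin n) := by simp [h1]
      rw [e1, e2, h2, map_smul, hξlast, key, smul_sub,
        smul_comm (Polynomial.C (X (⟨n - 1, by omega⟩ : Fin n)))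
          ((Polynomial.X : Polynomial (MvPolynomial (Fin n) ℤ)) ^ (m / n)),
        pow_succ, mul_smul,
        smul_comm ((Polynomial.X : Polynomial (MvPolynomial (Fin n) ℤ)) ^ (m / n))
          (Polynomial.X : Polynomial (MvPolynomial (Fin n) ℤ))]
  intro x
  induction x using Finsupp.induction_linear with
  | zero => simp
  | add a b ha hb => simp [map_add, ha, hb]
  | single m c =>
    have : (Finsupp.single m c : ℕ →₀ MvPolynomial (Fin n) ℤ)
        = c • Finsupp.single m 1 := by
      rw [Finsupp.smul_single, smul_eq_mul, mul_one]
    rw [this, map_smul, map_smul, map_smul, single, key, key, ← map_smul]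

end
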